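/- For every δ > 0, the tube T(δ) = ⋃_{0≤t≤δ} F(t) equals the convex hull of F(δ) ∪ F(0). -/

import Mathlib

open scoped Pointwise

/-- The set `F(t) = B̄^d_r + B̄^{N−1}_{tε} + {x₀ + tηu}` (Minkowski sum) in `ℝ^N`,
`N = n+1`, where `B̄^d_r` is the closed ball of radius `r` centered at `0` in the
`d`-dimensional subspace `Ed ⊆ E = {x : x_N = 0}`, `B̄^{N−1}_{tε}` is the closed ball of
radius `tε` centered at `0` in `E`, and `η = ⟨u, e_N⟩⁻¹`. -/
def Fset (n : ℕ) (Ed : Submodule ℝ (Fin (n+1) → ℝ)) (r ε : ℝ)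
    (x₀ u : Fin (n+1) → ℝ) (t : ℝ) : Set (Fin (n+1) → ℝ) :=
  {y | y ∈ Ed ∧ ∑ i, (y i) ^ 2 ≤ r ^ 2} +
  {y | y (Fin.last n) = 0 ∧ ∑ i, (y i) ^ 2 ≤ (t * ε) ^ 2} +
  {x₀ + (t * (u (Fin.last n))⁻¹) • u}


private lemma sqrt_sum_sq_eq_norm {m : ℕ} (y : Fin m → ℝ) :
    Real.sqrt (∑ i, (y i)^2) = ‖(WithLp.equiv 2 (Fin m → ℝ)).symm y‖ := by
  rw [EuclideanSpace.norm_eq]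
  simp [Real.norm_eq_abs, sq_abs]

private lemma sum_sq_le_iff {m : ℕ} (y : Fin m → ℝ) {c : ℝ} (hc : 0 ≤ c) :
    (∑ i, (y i)^2) ≤ c^2 ↔ Real.sqrt (∑ i, (y i)^2) ≤ c := by
  constructor
  · intro h
    calc Real.sqrt (∑ i, (y i)^2) ≤ Real.sqrt (c^2) := Real.sqrt_le_sqrt h
    _ = c := Real.sqrt_sq hc
  · intro h
    have h0 : 0 ≤ ∑ i, (y i)^2 := Finset.sum_nonneg fun i _ => sq_nonneg _
    calc ∑ i, (y i)^2 = (Real.sqrt (∑ i, (y i)^2))^2 := (Real.sq_sqrt h0).symm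
    _ ≤ c^2 := pow_le_pow_left₀ (Real.sqrt_nonneg _) h 2

private lemma sum_sq_combo {m : ℕ} (y z : Fin m → ℝ) {a b cy cz : ℝ}
    (ha : 0 ≤ a) (hb : 0 ≤ b) (hcy : 0 ≤ cy) (hcz : 0 ≤ cz)
    (hy : ∑ i, (y i)^2 ≤ cy^2) (hz : ∑ i, (z i)^2 ≤ cz^2) :
    ∑ i, ((a • y + b • z) i)^2 ≤ (a*cy + b*cz)^2 := by
  have hy' := (sum_sq_le_iff y hcy).1 hy
  have hz' := (sum_sq_le_iff z hcz).1 hz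
  rw [sum_sq_le_iff _ (by positivity)]
  rw [sqrt_sum_sq_eq_norm] at hy' hz' ⊢
  have heq : (WithLp.equiv 2 (Fin m → ℝ)).symm (a • y + b • z)
      = a • (WithLp.equiv 2 (Fin m → ℝ)).symm y + b • (WithLp.equiv 2 (Fin m → ℝ)).symm z := by
    simp
  rw [heq]
  calc ‖a • (WithLp.equiv 2 (Fin m → ℝ)).symm y + b • (WithLp.equiv 2 (Fin m → ℝ)).symm z‖
      ≤ ‖a • (WithLp.equiv 2 (Fin m → ℝ)).symm y‖ + ‖b • (WithLp.equiv 2 (Fin m → ℝ)).symm z‖ :=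
        norm_add_le _ _
    _ = a * ‖(WithLp.equiv 2 (Fin m → ℝ)).symm y‖ + b * ‖(WithLp.equiv 2 (Fin m → ℝ)).symm z‖ := by
        rw [norm_smul, norm_smul, Real.norm_eq_abs, Real.norm_eq_abs,
          abs_of_nonneg ha, abs_of_nonneg hb]
    _ ≤ a * cy + b * cz := by
        have := mul_le_mul_of_nonneg_left hy' ha
        have := mul_le_mul_of_nonneg_left hz' hb
        linarith

private lemma mem_Fset_iff {n : ℕ} {Ed : Submodule ℝ (Fin (n+1) → ℝ)} {r ε : ℝ}
    {x₀ u : Fin (n+1) → ℝ} {t : ℝ} {x : Fin (n+1) → ℝ} :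
    x ∈ Fset n Ed r ε x₀ u t ↔ ∃ a b, a ∈ Ed ∧ (∑ i, (a i)^2) ≤ r^2 ∧
      b (Fin.last n) = 0 ∧ (∑ i, (b i)^2) ≤ (t*ε)^2 ∧
      x = a + b + (x₀ + (t * (u (Fin.last n))⁻¹) • u) := by
  simp only [Fset, Set.mem_add, Set.mem_singleton_iff, Set.mem_setOf_eq]
  constructor
  · rintro ⟨-, ⟨a, ⟨ha1, ha2⟩, b, ⟨hb1, hb2⟩, rfl⟩, c, rfl, rfl⟩
    exact ⟨a, b, ha1, ha2, hb1, hb2, rfl⟩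
  · rintro ⟨a, b, ha1, ha2, hb1, hb2, rfl⟩
    exact ⟨a + b, ⟨a, ⟨ha1, ha2⟩, b, ⟨hb1, hb2⟩, rfl⟩, _, rfl, rfl⟩

/-- for every `δ > 0`, the tube `T(δ) = ⋃_{0 ≤ t ≤ δ} F(t)` equals the convex
hull of `F(δ) ∪ F(0)`. -/
theorem stmt8 (n : ℕ) (hn : 1 ≤ n) (d : ℕ) (hd : d ≤ n)
    (Ed : Submodule ℝ (Fin (n+1) → ℝ))
    (hEdE : ∀ y ∈ Ed, y (Fin.last n) = 0)
    (hEdrank : Module.finrank ℝ Ed = d)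
    (r ε : ℝ) (hr : 0 < r) (hε : 0 < ε)
    (x₀ : Fin (n+1) → ℝ) (hx₀ : x₀ (Fin.last n) = 0)
    (u : Fin (n+1) → ℝ) (hu : ∑ i, (u i) ^ 2 = 1) (huN : 0 < u (Fin.last n))
    (δ : ℝ) (hδ : 0 < δ) :
    (⋃ t ∈ Set.Icc (0 : ℝ) δ, Fset n Ed r ε x₀ u t) =
      convexHull ℝ (Fset n Ed r ε x₀ u δ ∪ Fset n Ed r ε x₀ u 0) := by
  apply Set.Subset.antisymm
  · -- union ⊆ hull
    intro x hx
    simp only [Set.mem_iUnion, exists_prop] at hx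
    obtain ⟨t, ht, hx⟩ := hx
    obtain ⟨a, b, ha1, ha2, hb1, hb2, rfl⟩ := mem_Fset_iff.1 hx
    rcases eq_or_lt_of_le ht.1 with h0 | h0
    · apply subset_convexHull ℝ _
      refine Set.mem_union_right _ ?_
      rw [← h0] at hb2 ⊢
      exact mem_Fset_iff.2 ⟨a, b, ha1, ha2, hb1, hb2, rfl⟩
    · set s := t / δ with hs
      have hs0 : 0 < s := div_pos h0 hδ
      have hs1 : s ≤ 1 := (div_le_one hδ).2 ht.2
      have hp : a + 0 + (x₀ + ((0:ℝ) * (u (Fin.last n))⁻¹) • u) ∈ Fset n Ed r ε x₀ u 0 :=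
        mem_Fset_iff.2 ⟨a, 0, ha1, ha2, by simp, by simp, rfl⟩
      have hq : a + (δ/t) • b + (x₀ + (δ * (u (Fin.last n))⁻¹) • u) ∈ Fset n Ed r ε x₀ u δ := by
        refine mem_Fset_iff.2 ⟨a, (δ/t) • b, ha1, ha2, by simp [hb1], ?_, rfl⟩
        have hsum : ∑ i, (((δ/t) • b) i)^2 = (δ/t)^2 * ∑ i, (b i)^2 := by
          simp [smul_eq_mul, mul_pow, Finset.mul_sum]
        rw [hsum]
        calc (δ/t)^2 * ∑ i, (b i)^2 ≤ (δ/t)^2 * (t*ε)^2 :=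
              mul_le_mul_of_nonneg_left hb2 (by positivity)
          _ = (δ*ε)^2 := by
              field_simp
      have hmem := (convex_convexHull ℝ (Fset n Ed r ε x₀ u δ ∪ Fset n Ed r ε x₀ u 0))
        (subset_convexHull ℝ _ (Set.mem_union_left _ hq))
        (subset_convexHull ℝ _ (Set.mem_union_right _ hp))
        hs0.le (sub_nonneg.2 hs1) (by ring)
      convert hmem using 1
      match_scalars <;> (try ring1) <;>
        (rw [hs]; field_simp [h0.ne', hδ.ne', huN.ne']; try ring)
  · -- hull ⊆ union
    apply convexHull_min
    · rintro x (hx | hx)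
      · exact Set.mem_biUnion (Set.right_mem_Icc.2 hδ.le) hx
      · exact Set.mem_biUnion (Set.left_mem_Icc.2 hδ.le) hx
    · rintro x hx y hy lam mu hlam hmu hlm
      simp only [Set.mem_iUnion, exists_prop] at hx hy ⊢
      obtain ⟨t, ht, hx⟩ := hx
      obtain ⟨t', ht', hy⟩ := hy
      obtain ⟨a, b, ha1, ha2, hb1, hb2, rfl⟩ := mem_Fset_iff.1 hx
      obtain ⟨a', b', ha1', ha2', hb1', hb2', rfl⟩ := mem_Fset_iff.1 hy
      refine ⟨lam*t + mu*t',
        ⟨add_nonneg (mul_nonneg hlam ht.1) (mul_nonneg hmu ht'.1), ?_⟩, ?_⟩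
      · have h1 := mul_le_mul_of_nonneg_left ht.2 hlam
        have h2 := mul_le_mul_of_nonneg_left ht'.2 hmu
        nlinarith
      · refine mem_Fset_iff.2 ⟨lam • a + mu • a', lam • b + mu • b',
          Ed.add_mem (Ed.smul_mem _ ha1) (Ed.smul_mem _ ha1'), ?_, ?_, ?_, ?_⟩
        · have := sum_sq_combo a a' hlam hmu hr.le hr.le ha2 ha2'
          calc ∑ i, ((lam • a + mu • a') i)^2 ≤ (lam*r + mu*r)^2 := this
            _ = r^2 := by rw [show lam*r + mu*r = r by nlinarith]
        · simp [hb1, hb1']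
        · have := sum_sq_combo b b' hlam hmu (mul_nonneg ht.1 hε.le)
            (mul_nonneg ht'.1 hε.le) hb2 hb2'
          calc ∑ i, ((lam • b + mu • b') i)^2 ≤ (lam*(t*ε) + mu*(t'*ε))^2 := this
            _ = ((lam*t + mu*t')*ε)^2 := by ring
        · match_scalars <;> first | ring1 | linarith
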